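/- Let q ≥ 2 and z ∈ ℂ with z ≠ 0. Suppose complex numbers A (the vertex pairing), B (the geodesic pairing), and C (the modified edge pairing) satisfy, for every n ∈ ℕ: A = B·((1 − z⁻²)·Σ_{j=0}^{n−1}(q/z²)ʲ + (q/z²)ⁿ) + (q/z²)ⁿ·C, together with B = A − C. Then (z² − q)·A = (z² − 1)·B. -/
import Mathlib


/-- Algebraic core of the pairing formula: if `A = B·((1 − z⁻²)·Σ_{j<n}(q/z²)ʲ + (q/z²)ⁿ)
+ (q/z²)ⁿ·C` holds for all `n` and `B = A − C`, then `(z² − q)·A = (z² − 1)·B`. -/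
theorem pairing_formula_algebraic_core
    (q : ℕ) (hq : 2 ≤ q) (z : ℂ) (hz : z ≠ 0) (A B C : ℂ)
    (h : ∀ n : ℕ,
      A = B * ((1 - (z ^ 2)⁻¹) * ∑ j ∈ Finset.range n, ((q : ℂ) / z ^ 2) ^ j
            + ((q : ℂ) / z ^ 2) ^ n)
          + ((q : ℂ) / z ^ 2) ^ n * C)
    (hBC : B = A - C) :
    (z ^ 2 - (q : ℂ)) * A = (z ^ 2 - 1) * B := by
  have h1 := h 1
  simp [Finset.sum_range_one] at h1
  have hz2 : (z : ℂ) ^ 2 ≠ 0 := pow_ne_zero _ hz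
  have hC : C = A - B := by rw [hBC]; ring
  rw [hC] at h1
  field_simp at h1
  linear_combination h1
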